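/- Let R be a regular F-finite domain of prime characteristic p, and let 𝔞 ⊆ 𝔟 be nonzero proper ideals with 𝔞 generated by m elements. Fix q a power of p and suppose μ(q) = max{k : 𝔞^[k] ⊄ 𝔟^[q]} satisfies μ(q) ≠ q − 1. Then μ(q) ≥ ν(q) − (m−1)(q−1)/(p−1), where ν(q) = max{k : 𝔞^k ⊄ 𝔟^[q]}. -/

import Mathlib

open scoped BigOperators

/-- The `q`-th bracket power of an ideal: the ideal generated by `q`-th powers
of elements of `a`. -/
def bracketPow {R : Type*} [CommRing R] (a : Ideal R) (q : ℕ) : Ideal R :=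
  Ideal.span ((fun x => x ^ q) '' (a : Set R))

/-- The generalized `k`-th Frobenius power of an ideal, defined via the base-`p`
digits of `k`:  `𝔞^[k] = ∏ᵢ (𝔞^[pⁱ])^(kᵢ)` where `kᵢ = k / pⁱ % p` is the `i`-th
base-`p` digit of `k` (digits with index `> k` vanish, so the product below suffices). -/
def frobPow {R : Type*} [CommRing R] (p : ℕ) (a : Ideal R) (k : ℕ) : Ideal R :=
  ∏ i ∈ Finset.range (k + 1), bracketPow a (p ^ i) ^ (k / p ^ i % p)

/-- Choose `γ ≤ c` pointwise with prescribed sum. -/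
lemma exists_le_sum_eq {ι : Type*} [DecidableEq ι] (s : Finset ι) (c : ι → ℕ) :
    ∀ n : ℕ, n ≤ ∑ i ∈ s, c i →
      ∃ γ : ι → ℕ, (∀ i, γ i ≤ c i) ∧ ∑ i ∈ s, γ i = n := by
  induction s using Finset.induction with
  | empty => intro n hn; simp at hn; exact ⟨fun _ => 0, fun _ => Nat.zero_le _, by simp [hn]⟩
  | @insert t s hts ih =>
    intro n hn
    rw [Finset.sum_insert hts] at hn
    obtain ⟨γ, hγ, hsum⟩ := ih (n - min (c t) n) (by omega)
    refine ⟨Function.update γ t (min (c t) n), ?_, ?_⟩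
    · intro i
      rcases eq_or_ne i t with rfl | h
      · simp [Function.update_self]
      · simp [Function.update_of_ne h]; exact hγ i
    · rw [Finset.sum_insert hts, Function.update_self]
      have hrest : ∑ x ∈ s, Function.update γ t (min (c t) n) x = ∑ x ∈ s, γ x :=
        Finset.sum_congr rfl fun i hi =>
          Function.update_of_ne (by rintro rfl; exact hts hi) _ _
      rw [hrest, hsum]
      omega

/-- digit `i` of `j % p^e` equals digit `i` of `j`, for `i < e`. -/
lemma digit_mod_pow (p : ℕ) (j i e : ℕ) (hie : i < e) :
    j % p ^ e / p ^ i % p = j / p ^ i % p := by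
  rw [← Nat.mod_mul_right_div_self, ← Nat.mod_mul_right_div_self, ← pow_succ,
    Nat.mod_mod_of_dvd _ (pow_dvd_pow p hie)]

/-- Key combinatorial lemma: splitting the base-`p` digits of `j` among
exponent vectors of a monomial of large enough degree. -/
lemma digit_split (p m : ℕ) (hp : 1 < p) (hm : 1 ≤ m) :
    ∀ (e : ℕ) (j : ℕ) (α : Fin m → ℕ), j < p ^ e →
      j + (m - 1) * (∑ i ∈ Finset.range e, p ^ i) ≤ ∑ t, α t →
      ∃ β : Fin m → ℕ → ℕ,
        (∀ t, ∑ i ∈ Finset.range e, β t i * p ^ i ≤ α t) ∧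
        (∀ i < e, ∑ t, β t i = j / p ^ i % p) := by
  intro e
  induction e with
  | zero =>
    intro j α hj _
    have hj0 : j = 0 := by simpa using hj
    subst hj0
    exact ⟨fun _ _ => 0, fun t => by simp, fun i hi => absurd hi (Nat.not_lt_zero i)⟩
  | succ e ih =>
    intro j α hj hα
    set P := p ^ e with hP
    have hP0 : 0 < P := pow_pos (by omega) e
    set c := j / P with hc
    have hcp : c < p := Nat.div_lt_iff_lt_mul hP0 |>.2 (by rw [mul_comm, ← pow_succ]; exact hj)
    have hjc : P * c + j % P = j := Nat.div_add_mod j P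
    -- the caps
    have hcaps : c ≤ ∑ t, α t / P := by
      by_contra hlt
      push_neg at hlt
      have h1 : ∑ t, α t < (∑ t, α t / P + m) * P := by
        calc ∑ t, α t < ∑ t, (α t / P + 1) * P := by
              apply Finset.sum_lt_sum_of_nonempty
              · exact Finset.univ_nonempty_iff.2 (Fin.pos_iff_nonempty.1 hm)
              · intro t _
                calc α t = P * (α t / P) + α t % P := (Nat.div_add_mod _ _).symm
                  _ < P * (α t / P) + P := Nat.add_lt_add_left (Nat.mod_lt _ hP0) _
                  _ = (α t / P + 1) * P := by ring
          _ = (∑ t, α t / P + m) * P := by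
              rw [Finset.sum_congr rfl fun t (_ : t ∈ Finset.univ) => add_mul (α t / P) 1 P,
                Finset.sum_add_distrib, ← Finset.sum_mul, Finset.sum_const, Finset.card_univ,
                Fintype.card_fin, add_mul, smul_eq_mul, one_mul, mul_comm m P]
      have h2 : (c + (m - 1)) * P ≤ ∑ t, α t := by
        have hSP : (m - 1) * P ≤ (m - 1) * ∑ i ∈ Finset.range (e + 1), p ^ i := by
          apply Nat.mul_le_mul_left
          rw [Finset.sum_range_succ]
          omega
        have hcj : c * P ≤ j := by rw [mul_comm]; omega
        calc (c + (m - 1)) * P = c * P + (m - 1) * P := by ring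
          _ ≤ j + (m - 1) * ∑ i ∈ Finset.range (e + 1), p ^ i := by omega
          _ ≤ ∑ t, α t := hα
      have := lt_of_mul_lt_mul_right (Nat.lt_of_le_of_lt h2 h1) (Nat.zero_le P)
      omega
    obtain ⟨γ, hγ, hγsum⟩ := exists_le_sum_eq Finset.univ (fun t => α t / P) c hcaps
    have hγP : ∀ t, γ t * P ≤ α t := fun t =>
      le_trans (Nat.mul_le_mul_right P (hγ t)) (Nat.div_mul_le_self _ _)
    set α' : Fin m → ℕ := fun t => α t - γ t * P with hα'
    have hsum' : ∑ t, α' t + c * P = ∑ t, α t := by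
      have : ∑ t, α' t + ∑ t, γ t * P = ∑ t, α t := by
        rw [← Finset.sum_add_distrib]
        exact Finset.sum_congr rfl fun t _ => Nat.sub_add_cancel (hγP t)
      rw [← this, ← Finset.sum_mul, hγsum]
    have hrec : j % P + (m - 1) * (∑ i ∈ Finset.range e, p ^ i) ≤ ∑ t, α' t := by
      have hS : (∑ i ∈ Finset.range (e+1), p ^ i) = (∑ i ∈ Finset.range e, p ^ i) + P :=
        Finset.sum_range_succ _ _
      have h4 := hα
      rw [hS, Nat.mul_add] at h4
      have h5 : c * P = P * c := Nat.mul_comm _ _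
      omega
    obtain ⟨β', hβ'1, hβ'2⟩ := ih (j % P) α' (Nat.mod_lt _ hP0) hrec
    refine ⟨fun t i => if i = e then γ t else β' t i, ?_, ?_⟩
    · intro t
      simp only [Finset.sum_range_succ]
      have h1 : ∑ i ∈ Finset.range e, (if i = e then γ t else β' t i) * p ^ i
          = ∑ i ∈ Finset.range e, β' t i * p ^ i :=
        Finset.sum_congr rfl fun i hi => by
          rw [if_neg (Nat.ne_of_lt (Finset.mem_range.1 hi))]
      rw [h1]
      simp only [if_true]
      have h2 := hβ'1 t
      have h3 := hγP t
      have h4 : α' t = α t - γ t * P := rfl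
      have h5 : γ t * P = γ t * p ^ e := by rw [hP]
      omega
    · intro i hi
      simp only
      by_cases heq : i = e
      · subst heq
        rw [Finset.sum_congr rfl fun t (_ : t ∈ Finset.univ) => if_pos rfl, hγsum]
        show c = j / P % p
        rw [← hc, Nat.mod_eq_of_lt hcp]
      · have hi' : i < e := by omega
        rw [Finset.sum_congr rfl fun t (_ : t ∈ Finset.univ) => if_neg heq, hβ'2 i hi',
          digit_mod_pow p j i e hi']

/-- A power of a finitely generated ideal is contained in `J` provided all
monomials of that degree in the generators lie in `J`. -/
lemma pow_le_of_monomials {R : Type*} [CommRing R] {m : ℕ} (g : Fin m → R) (N : ℕ)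
    (J : Ideal R) (h : ∀ α : Fin m → ℕ, ∑ t, α t = N → (∏ t, g t ^ α t) ∈ J) :
    Ideal.span (Set.range g) ^ N ≤ J := by
  show Submodule.span R (Set.range g) ^ N ≤ J
  rw [Submodule.span_pow, Submodule.span_le]
  rintro x hx
  rw [Set.mem_pow] at hx
  obtain ⟨f, rfl⟩ := hx
  have hc : ∀ i, ∃ t : Fin m, g t = (f i : R) := fun i => (f i).2
  choose cf hcf using hc
  have hx' : (List.ofFn fun i => (f i : R)).prod = ∏ t : Fin m,
      g t ^ (Finset.univ.filter (fun i => cf i = t)).card := by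
    rw [List.prod_ofFn]
    rw [← Finset.prod_fiberwise Finset.univ cf (fun i => (f i : R))]
    refine Finset.prod_congr rfl fun t _ => ?_
    rw [Finset.prod_congr rfl (fun i hi => ?_), Finset.prod_const]
    · rw [← hcf i, (Finset.mem_filter.1 hi).2]
  rw [hx']
  apply h
  have hN : (Finset.univ : Finset (Fin N)).card = N := by simp
  exact ((Finset.card_eq_sum_card_fiberwise fun i _ => Finset.mem_univ (cf i)).symm).trans hN

lemma frobPow_eq_range {R : Type*} [CommRing R] (p : ℕ) (hp : 1 < p) (a : Ideal R)
    (j e : ℕ) (hj : j < p ^ e) :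
    frobPow p a j = ∏ i ∈ Finset.range e, bracketPow a (p ^ i) ^ (j / p ^ i % p) := by
  have key : ∀ i, j < p ^ i → bracketPow a (p ^ i) ^ (j / p ^ i % p) = 1 := by
    intro i hi
    rw [Nat.div_eq_of_lt hi]
    simp
  unfold frobPow
  rw [Finset.prod_subset (Finset.range_subset_range.2 (Nat.le_add_right (j+1) e))
      (fun i _ hi => key i ?_),
    ← Finset.prod_subset (Finset.range_subset_range.2 (by omega : e ≤ j + 1 + e))
      (fun i _ hi => key i ?_)]
  · rw [Finset.mem_range, not_lt] at hi
    exact lt_of_lt_of_le hj (Nat.pow_le_pow_right (by omega) hi)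
  · rw [Finset.mem_range, not_lt] at hi
    exact lt_of_lt_of_le (Nat.lt_pow_self (n := j) hp) (Nat.pow_le_pow_right (by omega) (by omega))

lemma bracketPow_le_bracketPow {R : Type*} [CommRing R] {a b : Ideal R} (hab : a ≤ b)
    (p e i : ℕ) (hp : 0 < p) (hei : e ≤ i) :
    bracketPow a (p ^ i) ≤ bracketPow b (p ^ e) := by
  rw [bracketPow, Ideal.span_le]
  rintro _ ⟨x, hx, rfl⟩
  show x ^ p ^ i ∈ (Ideal.span ((fun x => x ^ p ^ e) '' (b : Set R)) : Set R)
  have hxe : x ^ p ^ i = (x ^ p ^ (i - e)) ^ p ^ e := by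
    rw [← pow_mul, ← pow_add, Nat.sub_add_cancel hei]
  rw [hxe]
  exact Ideal.subset_span ⟨x ^ p ^ (i - e), Ideal.pow_mem_of_mem _ (hab hx) _ (pow_pos hp _), rfl⟩

theorem stmt_18 {R : Type*} [CommRing R] [IsDomain R] [IsNoetherianRing R]
    (p : ℕ) [Fact p.Prime] [CharP R p]
    (hFfin : (frobenius R p).Finite) (hreg : (frobenius R p).Flat)
    (m : ℕ) (a b : Ideal R) (g : Fin m → R) (hg : a = Ideal.span (Set.range g))
    (ha0 : a ≠ ⊥) (hb0 : b ≠ ⊥) (haT : a ≠ ⊤) (hbT : b ≠ ⊤) (hab : a ≤ b)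
    (e : ℕ)
    (hmu : sSup {k : ℕ | ¬ frobPow p a k ≤ bracketPow b (p ^ e)} ≠ p ^ e - 1) :
    sSup {k : ℕ | ¬ a ^ k ≤ bracketPow b (p ^ e)} ≤
      sSup {k : ℕ | ¬ frobPow p a k ≤ bracketPow b (p ^ e)} +
        (m - 1) * ∑ i ∈ Finset.range e, p ^ i := by
  have hp : 1 < p := (Fact.out : p.Prime).one_lt
  set q := p ^ e with hq
  have hq0 : 0 < q := pow_pos (by omega) e
  set S := ∑ i ∈ Finset.range e, p ^ i with hS
  set D := (m - 1) * S with hD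
  set μs := {k : ℕ | ¬ frobPow p a k ≤ bracketPow b q} with hμs
  set νs := {k : ℕ | ¬ a ^ k ≤ bracketPow b q} with hνs
  have hm : 1 ≤ m := by
    by_contra h
    push_neg at h
    interval_cases m
    apply ha0
    rw [hg, Set.range_eq_empty, Ideal.span_empty]
  -- bracketPow b q is proper
  have hbq : bracketPow b q ≠ ⊤ := by
    intro hT
    apply hbT
    have hle : bracketPow b q ≤ b := by
      rw [bracketPow, Ideal.span_le]
      rintro _ ⟨x, hx, rfl⟩
      exact Ideal.pow_mem_of_mem _ hx _ hq0
    rw [eq_top_iff, ← hT]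
    exact hle
  -- elements of μs are < q
  have hμlt : ∀ k ∈ μs, k < q := by
    intro k hk
    by_contra hge
    push_neg at hge
    apply hk
    have hk0 : k ≠ 0 := by omega
    set i := Nat.log p k with hi
    have hpi : p ^ i ≤ k := Nat.pow_log_le_self p hk0
    have hei : e ≤ i := (Nat.le_log_iff_pow_le hp hk0).2 hge
    have hik : i < k + 1 := by
      have := Nat.lt_pow_self (n := i) hp
      omega
    have hd : 1 ≤ k / p ^ i % p := by
      have h1 : 1 ≤ k / p ^ i := (Nat.one_le_div_iff (pow_pos (by omega) i)).2 hpi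
      have h2 : k / p ^ i < p := by
        rw [Nat.div_lt_iff_lt_mul (pow_pos (by omega) i), mul_comm, ← pow_succ]
        exact Nat.lt_pow_succ_log_self hp k
      rw [Nat.mod_eq_of_lt h2]
      exact h1
    calc frobPow p a k
        ≤ bracketPow a (p ^ i) ^ (k / p ^ i % p) := by
          unfold frobPow
          rw [Finset.prod_eq_mul_prod_sdiff_singleton_of_mem (Finset.mem_range.2 hik)]
          exact Ideal.mul_le_left
      _ ≤ bracketPow a (p ^ i) := Ideal.pow_le_self (by omega)
      _ ≤ bracketPow b q := bracketPow_le_bracketPow hab p e i (by omega) hei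
  have hμbdd : BddAbove μs := ⟨q, fun k hk => (hμlt k hk).le⟩
  have hμ0 : 0 ∈ μs := by
    simp only [hμs, Set.mem_setOf_eq, frobPow]
    rw [Finset.prod_range_one]
    simp only [pow_zero, Nat.zero_div, Nat.zero_mod, pow_zero]
    intro hT
    exact hbq (top_le_iff.1 (by simpa using hT))
  -- the main inclusion
  have hmain : ∀ j < q, a ^ (j + D) ≤ frobPow p a j := by
    intro j hj
    rw [frobPow_eq_range p hp a j e hj, hg]
    apply pow_le_of_monomials
    intro α hα
    obtain ⟨β, hβ1, hβ2⟩ := digit_split p m hp hm e j α hj (by simp [hα, hD, hS])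
    have hsplit : (∏ t, g t ^ α t) =
        (∏ t, g t ^ (α t - ∑ i ∈ Finset.range e, β t i * p ^ i)) *
        ∏ i ∈ Finset.range e, ∏ t, (g t ^ p ^ i) ^ β t i := by
      calc ∏ t, g t ^ α t
          = ∏ t, (g t ^ (α t - ∑ i ∈ Finset.range e, β t i * p ^ i) *
              ∏ i ∈ Finset.range e, (g t ^ p ^ i) ^ β t i) := by
            refine Finset.prod_congr rfl fun t _ => ?_
            conv_lhs => rw [← Nat.sub_add_cancel (hβ1 t)]
            rw [pow_add]
            congr 1
            rw [← Finset.prod_pow_eq_pow_sum]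
            exact Finset.prod_congr rfl fun i _ => pow_mul' (g t) _ _
        _ = _ := by rw [Finset.prod_mul_distrib, Finset.prod_comm]
    rw [hsplit]
    apply Ideal.mul_mem_left
    apply Ideal.prod_mem_prod
    intro i hi
    rw [← hβ2 i (Finset.mem_range.1 hi), ← Finset.prod_pow_eq_pow_sum]
    apply Ideal.prod_mem_prod
    intro t _
    refine Ideal.pow_mem_pow ?_ _
    exact Ideal.subset_span ⟨g t, Ideal.subset_span (Set.mem_range_self t), rfl⟩
  -- q - 1 is not in μs
  have hq1 : frobPow p a (q - 1) ≤ bracketPow b q := by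
    by_contra h
    apply hmu
    refine le_antisymm (csSup_le ⟨0, hμ0⟩ fun k hk => ?_) (le_csSup hμbdd h)
    have := hμlt k hk
    omega
  -- conclude
  refine csSup_le ⟨0, ?_⟩ fun k hk => ?_
  · simp only [hνs, Set.mem_setOf_eq, pow_zero]
    intro hT
    exact hbq (top_le_iff.1 (by simpa using hT))
  · rcases le_or_gt k D with hkD | hkD
    · omega
    rcases le_or_gt (k - D) (q - 1) with hkq | hkq
    · have hj : k - D < q := by omega
      have : ¬ frobPow p a (k - D) ≤ bracketPow b q := by
        intro hle
        apply hk
        calc a ^ k = a ^ (k - D + D) := by rw [Nat.sub_add_cancel hkD.le]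
          _ ≤ frobPow p a (k - D) := hmain _ hj
          _ ≤ bracketPow b q := hle
      have := le_csSup hμbdd this
      omega
    · exfalso
      apply hk
      calc a ^ k ≤ a ^ (q - 1 + D) := Ideal.pow_le_pow_right (by omega)
        _ ≤ frobPow p a (q - 1) := hmain _ (by omega)
        _ ≤ bracketPow b q := hq1
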